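/- Let (X,μ) be a σ-finite measure space and f ∈ L^1(X) + L^∞(X). Then for every t > 0, the K-functional satisfies K(f, t, L^1(X), L^∞(X)) = t·f^{**}(t), where f^{**}(t) = (1/t)∫₀^t f^*(s) ds and f^* is the decreasing rearrangement of f. -/

import Mathlib

open MeasureTheory Set
open scoped ENNReal NNReal

/-- The decreasing rearrangement `f^*(t) = inf { λ : μ({|f| > λ}) ≤ t }`. -/
noncomputable def decRearrangement {X : Type} [MeasurableSpace X] (μ : Measure X)
    (f : X → ℝ) (t : ℝ) : ℝ≥0∞ :=
  sInf {l : ℝ≥0∞ | μ {x | l < (‖f x‖₊ : ℝ≥0∞)} ≤ ENNReal.ofReal t}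

/-- The maximal decreasing rearrangement `f^{**}(t) = (1/t) ∫₀^t f^*(s) ds`. -/
noncomputable def maxDecRearrangement {X : Type} [MeasurableSpace X] (μ : Measure X)
    (f : X → ℝ) (t : ℝ) : ℝ≥0∞ :=
  (ENNReal.ofReal t)⁻¹ * ∫⁻ s in Set.Ioo (0 : ℝ) t, decRearrangement μ f s

/-- The K-functional for the couple `(L¹(μ), L^∞(μ))`:
`K(f,t) = inf { ‖g‖₁ + t ‖h‖_∞ : f = g + h }`. -/
noncomputable def KfunctionalL1Linfty {X : Type} [MeasurableSpace X] (μ : Measure X)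
    (f : X → ℝ) (t : ℝ) : ℝ≥0∞ :=
  ⨅ (g : X → ℝ) (h : X → ℝ) (_ : f = g + h)
    (_ : AEStronglyMeasurable g μ) (_ : AEStronglyMeasurable h μ),
    eLpNorm g 1 μ + ENNReal.ofReal t * eLpNorm h ⊤ μ

section Aux

variable {X : Type} [MeasurableSpace X] {μ : Measure X} {f : X → ℝ}

lemma decRe_set_nonempty (t : ℝ) :
    {l : ℝ≥0∞ | μ {x | l < (‖f x‖₊ : ℝ≥0∞)} ≤ ENNReal.ofReal t}.Nonempty := by
  refine ⟨⊤, ?_⟩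
  have h : {x | (⊤ : ℝ≥0∞) < (‖f x‖₊ : ℝ≥0∞)} = ∅ := by
    ext x; simp
  show μ {x | (⊤ : ℝ≥0∞) < (‖f x‖₊ : ℝ≥0∞)} ≤ ENNReal.ofReal t
  simp [h]

/-- The infimum in the definition of the decreasing rearrangement is attained. -/
lemma meas_decRe_le (t : ℝ) :
    μ {x | decRearrangement μ f t < (‖f x‖₊ : ℝ≥0∞)} ≤ ENNReal.ofReal t := by
  set S := {l : ℝ≥0∞ | μ {x | l < (‖f x‖₊ : ℝ≥0∞)} ≤ ENNReal.ofReal t} with hSdef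
  obtain ⟨u, hu_anti, hu_tend, hu_mem⟩ :=
    exists_seq_tendsto_sInf (decRe_set_nonempty (μ := μ) (f := f) t) (OrderBot.bddBelow S)
  have hset : {x | sInf S < (‖f x‖₊ : ℝ≥0∞)} = ⋃ n, {x | u n < (‖f x‖₊ : ℝ≥0∞)} := by
    ext x
    simp only [mem_setOf_eq, mem_iUnion]
    constructor
    · intro hx
      exact (hu_tend.eventually_lt_const hx).exists
    · rintro ⟨n, hn⟩
      exact lt_of_le_of_lt (sInf_le (hu_mem n)) hn
  have hdir : Directed (· ⊆ ·) (fun n => {x | u n < (‖f x‖₊ : ℝ≥0∞)}) := by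
    have hmono : Monotone (fun n => {x | u n < (‖f x‖₊ : ℝ≥0∞)}) := by
      intro m n hmn
      exact fun x hx => lt_of_le_of_lt (hu_anti hmn) hx
    exact hmono.directed_le
  have : decRearrangement μ f t = sInf S := rfl
  rw [this, hset, hdir.measure_iUnion]
  exact iSup_le fun n => hu_mem n

lemma lt_decRe_iff {t : ℝ} {a : ℝ≥0∞} :
    a < decRearrangement μ f t ↔ ENNReal.ofReal t < μ {x | a < (‖f x‖₊ : ℝ≥0∞)} := by
  constructor
  · intro h
    by_contra hc
    push_neg at hc
    exact absurd (sInf_le hc : decRearrangement μ f t ≤ a) (not_le.mpr h)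
  · intro h
    rcases lt_or_ge a (decRearrangement μ f t) with h' | h'
    · exact h'
    · refine absurd (le_trans (measure_mono fun x hx => lt_of_le_of_lt h' hx)
        (meas_decRe_le t)) (not_le.mpr h)

lemma decRe_antitone : Antitone (decRearrangement μ f) := fun s t hst =>
  sInf_le_sInf fun l hl => le_trans hl (ENNReal.ofReal_le_ofReal hst)

lemma decRe_measurable : Measurable (decRearrangement μ f) :=
  decRe_antitone.measurable

lemma vol_layer (a : ℝ≥0∞) :
    volume ({l : ℝ | ENNReal.ofReal l < a} ∩ Ioi 0) = a := by
  rcases eq_or_ne a ⊤ with rfl | ha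
  · have h : {l : ℝ | ENNReal.ofReal l < ⊤} ∩ Ioi 0 = Ioi 0 := by
      ext l; simp [ENNReal.ofReal_lt_top]
    rw [h, Real.volume_Ioi]
  · have h : {l : ℝ | ENNReal.ofReal l < a} ∩ Ioi 0 = Ioo 0 a.toReal := by
      ext l
      simp only [mem_inter_iff, mem_setOf_eq, mem_Ioi, mem_Ioo]
      constructor
      · rintro ⟨h1, h2⟩
        exact ⟨h2, (ENNReal.ofReal_lt_iff_lt_toReal h2.le ha).mp h1⟩
      · rintro ⟨h1, h2⟩
        exact ⟨(ENNReal.ofReal_lt_iff_lt_toReal h1.le ha).mpr h2, h1⟩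
    rw [h, Real.volume_Ioo, sub_zero, ENNReal.ofReal_toReal ha]

lemma lintegral_shift (c : ℝ) (G : ℝ → ℝ≥0∞) :
    ∫⁻ l in Ioi c, G (l - c) = ∫⁻ l in Ioi (0 : ℝ), G l := by
  have hmp : MeasurePreserving (fun x : ℝ => x + c) volume volume :=
    measurePreserving_add_right volume c
  have hemb : MeasurableEmbedding (fun x : ℝ => x + c) :=
    (Homeomorph.addRight c).measurableEmbedding
  have key := hmp.setLIntegral_comp_emb hemb (fun l => G (l - c)) (Ioi 0)
  have himg : (fun x : ℝ => x + c) '' Ioi 0 = Ioi c := by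
    rw [Set.image_add_const_Ioi, zero_add]
  rw [himg] at key
  rw [← key]
  refine setLIntegral_congr_fun measurableSet_Ioi (fun l _ => ?_)
  simp

lemma vol_sect (t l : ℝ) :
    volume ({s : ℝ | ENNReal.ofReal l < decRearrangement μ f s} ∩ Ioo 0 t)
      = min (ENNReal.ofReal t) (μ {x | ENNReal.ofReal l < (‖f x‖₊ : ℝ≥0∞)}) := by
  set D := μ {x | ENNReal.ofReal l < (‖f x‖₊ : ℝ≥0∞)} with hD
  have hiff : ∀ s : ℝ, ENNReal.ofReal l < decRearrangement μ f s ↔ ENNReal.ofReal s < D :=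
    fun s => lt_decRe_iff
  rcases eq_or_ne D ⊤ with hDt | hDt
  · have h : {s : ℝ | ENNReal.ofReal l < decRearrangement μ f s} ∩ Ioo 0 t = Ioo 0 t := by
      ext s
      simp only [mem_inter_iff, mem_setOf_eq, and_iff_right_iff_imp]
      intro _
      rw [hiff s, hDt]
      exact ENNReal.ofReal_lt_top
    rw [h, Real.volume_Ioo, sub_zero, hDt]
    exact (min_eq_left le_top).symm
  · have h : {s : ℝ | ENNReal.ofReal l < decRearrangement μ f s} ∩ Ioo 0 t
        = Ioo 0 (min t D.toReal) := by
      ext s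
      simp only [mem_inter_iff, mem_setOf_eq, mem_Ioo, lt_min_iff]
      constructor
      · rintro ⟨h1, h2, h3⟩
        exact ⟨h2, h3, (ENNReal.ofReal_lt_iff_lt_toReal h2.le hDt).mp ((hiff s).mp h1)⟩
      · rintro ⟨h1, h2, h3⟩
        exact ⟨(hiff s).mpr ((ENNReal.ofReal_lt_iff_lt_toReal h1.le hDt).mpr h3), h1, h2⟩
    have hmono : Monotone ENNReal.ofReal := fun _ _ hh => ENNReal.ofReal_le_ofReal hh
    rw [h, Real.volume_Ioo, sub_zero, hmono.map_min, ENNReal.ofReal_toReal hDt]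

/-- The master formula: `∫₀^t f^* = ∫₀^∞ min(t, d_f(l)) dl`. -/
lemma decRe_master (t : ℝ) :
    ∫⁻ s in Ioo (0 : ℝ) t, decRearrangement μ f s
      = ∫⁻ l in Ioi (0 : ℝ), min (ENNReal.ofReal t)
          (μ {x | ENNReal.ofReal l < (‖f x‖₊ : ℝ≥0∞)}) := by
  set A : Set (ℝ × ℝ) := {p : ℝ × ℝ | ENNReal.ofReal p.2 < decRearrangement μ f p.1} with hA
  have hAmeas : MeasurableSet A :=
    measurableSet_lt (ENNReal.measurable_ofReal.comp measurable_snd)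
      (decRe_measurable.comp measurable_fst)
  have hstep1 : ∀ s : ℝ, decRearrangement μ f s
      = ∫⁻ l in Ioi (0 : ℝ), A.indicator (fun _ => (1 : ℝ≥0∞)) (s, l) := by
    intro s
    have hsec : MeasurableSet {l : ℝ | ENNReal.ofReal l < decRearrangement μ f s} :=
      measurableSet_lt ENNReal.measurable_ofReal measurable_const
    have : ∀ l : ℝ, A.indicator (fun _ => (1 : ℝ≥0∞)) (s, l)
        = ({l : ℝ | ENNReal.ofReal l < decRearrangement μ f s}).indicator
            (fun _ => (1 : ℝ≥0∞)) l := by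
      intro l; rfl
    simp_rw [this]
    rw [lintegral_indicator hsec, setLIntegral_one, Measure.restrict_apply hsec]
    exact (vol_layer _).symm
  calc
    ∫⁻ s in Ioo (0 : ℝ) t, decRearrangement μ f s
        = ∫⁻ s in Ioo (0 : ℝ) t, ∫⁻ l in Ioi (0 : ℝ),
            A.indicator (fun _ => (1 : ℝ≥0∞)) (s, l) := by
          exact setLIntegral_congr_fun measurableSet_Ioo (fun s _ => hstep1 s)
    _ = ∫⁻ l in Ioi (0 : ℝ), ∫⁻ s in Ioo (0 : ℝ) t,
            A.indicator (fun _ => (1 : ℝ≥0∞)) (s, l) := by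
          apply lintegral_lintegral_swap
          exact ((measurable_one.indicator hAmeas)).aemeasurable
    _ = ∫⁻ l in Ioi (0 : ℝ), min (ENNReal.ofReal t)
          (μ {x | ENNReal.ofReal l < (‖f x‖₊ : ℝ≥0∞)}) := by
          refine setLIntegral_congr_fun measurableSet_Ioi (fun l _ => ?_)
          have hsec : MeasurableSet {s : ℝ | ENNReal.ofReal l < decRearrangement μ f s} :=
            measurableSet_lt measurable_const decRe_measurable
          have h1 : ∀ s : ℝ, A.indicator (fun _ => (1 : ℝ≥0∞)) (s, l)
              = ({s : ℝ | ENNReal.ofReal l < decRearrangement μ f s}).indicator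
                  (fun _ => (1 : ℝ≥0∞)) s := by
            intro s; rfl
          simp_rw [h1]
          rw [lintegral_indicator hsec, setLIntegral_one, Measure.restrict_apply hsec]
          exact vol_sect t l

lemma decRe_lt_top (hf : ∃ g h : X → ℝ, f = g + h ∧ MemLp g 1 μ ∧ MemLp h ⊤ μ)
    {t : ℝ} (ht : 0 < t) : decRearrangement μ f t < ⊤ := by
  obtain ⟨g, h, hfgh, hg, hh⟩ := hf
  set M := eLpNorm h ⊤ μ with hM
  have hMtop : M ≠ ⊤ := hh.2.ne
  set G := ∫⁻ x, (‖g x‖₊ : ℝ≥0∞) ∂μ with hG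
  have hGtop : G ≠ ⊤ := by
    rw [hG]
    have := hg.2.ne
    rw [eLpNorm_one_eq_lintegral_enorm] at this
    exact this
  have htne : ENNReal.ofReal t ≠ 0 := (ENNReal.ofReal_pos.mpr ht).ne'
  set a := G / ENNReal.ofReal t + 1 with ha
  have hatop : a ≠ ⊤ :=
    ENNReal.add_ne_top.mpr ⟨(ENNReal.div_lt_top hGtop htne).ne, ENNReal.one_ne_top⟩
  have hda : μ {x | a ≤ (‖g x‖₊ : ℝ≥0∞)} ≤ ENNReal.ofReal t := by
    by_contra hc
    push_neg at hc
    have hm := mul_meas_ge_le_lintegral₀ hg.1.enorm a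
    have h1 : a * ENNReal.ofReal t ≤ G := le_trans (mul_le_mul_right hc.le a) hm
    have h2 : a * ENNReal.ofReal t = G + ENNReal.ofReal t := by
      rw [ha, add_mul, one_mul, ENNReal.div_mul_cancel htne ENNReal.ofReal_ne_top]
    rw [h2] at h1
    exact absurd h1 (not_le.mpr (ENNReal.lt_add_right hGtop htne))
  have hhb : ∀ᵐ x ∂μ, (‖h x‖₊ : ℝ≥0∞) ≤ M := by
    rw [hM, eLpNorm_exponent_top]
    exact ae_le_eLpNormEssSup
  have hsub : μ {x | M + a < (‖f x‖₊ : ℝ≥0∞)} ≤ ENNReal.ofReal t := by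
    refine le_trans (measure_mono_ae ?_) hda
    filter_upwards [hhb] with x hx hmem
    have hmem' : M + a < (‖f x‖₊ : ℝ≥0∞) := hmem
    show a ≤ (‖g x‖₊ : ℝ≥0∞)
    by_contra hga
    push_neg at hga
    have hfx : (‖f x‖₊ : ℝ≥0∞) ≤ (‖g x‖₊ : ℝ≥0∞) + (‖h x‖₊ : ℝ≥0∞) := by
      have h3 : ‖f x‖₊ ≤ ‖g x‖₊ + ‖h x‖₊ := by
        rw [hfgh, Pi.add_apply]; exact nnnorm_add_le _ _
      exact_mod_cast h3
    have hle : (‖f x‖₊ : ℝ≥0∞) ≤ a + M := le_trans hfx (add_le_add hga.le hx)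
    rw [add_comm] at hle
    exact absurd (lt_of_lt_of_le hmem' hle) (lt_irrefl _)
  calc decRearrangement μ f t ≤ M + a := sInf_le hsub
    _ < ⊤ := ENNReal.add_lt_top.mpr
        ⟨lt_top_iff_ne_top.mpr hMtop, lt_top_iff_ne_top.mpr hatop⟩

lemma decRe_integral_le (t : ℝ) (ht : 0 < t) (g h : X → ℝ) (hfgh : f = g + h)
    (hgm : AEStronglyMeasurable g μ) :
    ∫⁻ s in Ioo (0 : ℝ) t, decRearrangement μ f s
      ≤ eLpNorm g 1 μ + ENNReal.ofReal t * eLpNorm h ⊤ μ := by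
  set M := eLpNorm h ⊤ μ with hM
  rcases eq_or_ne M ⊤ with hMt | hMt
  · rw [hMt, ENNReal.mul_top (ENNReal.ofReal_pos.mpr ht).ne']
    simp
  set M' := M.toReal with hM'
  have hM'0 : 0 ≤ M' := ENNReal.toReal_nonneg
  have hMeq : ENNReal.ofReal M' = M := ENNReal.ofReal_toReal hMt
  have hhb : ∀ᵐ x ∂μ, (‖h x‖₊ : ℝ≥0∞) ≤ M := by
    rw [hM, eLpNorm_exponent_top]
    exact ae_le_eLpNormEssSup
  have key : ∀ l : ℝ, M' < l →
      μ {x | ENNReal.ofReal l < (‖f x‖₊ : ℝ≥0∞)}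
        ≤ μ {x | ENNReal.ofReal (l - M') < (‖g x‖₊ : ℝ≥0∞)} := by
    intro l hl
    refine measure_mono_ae ?_
    filter_upwards [hhb] with x hx hmem
    have hmem' : ENNReal.ofReal l < (‖f x‖₊ : ℝ≥0∞) := hmem
    show ENNReal.ofReal (l - M') < (‖g x‖₊ : ℝ≥0∞)
    by_contra hc
    push_neg at hc
    have hfx : (‖f x‖₊ : ℝ≥0∞) ≤ (‖g x‖₊ : ℝ≥0∞) + (‖h x‖₊ : ℝ≥0∞) := by
      have h3 : ‖f x‖₊ ≤ ‖g x‖₊ + ‖h x‖₊ := by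
        rw [hfgh, Pi.add_apply]; exact nnnorm_add_le _ _
      exact_mod_cast h3
    have hle : (‖f x‖₊ : ℝ≥0∞) ≤ ENNReal.ofReal (l - M') + M :=
      le_trans hfx (add_le_add hc hx)
    rw [← hMeq, ← ENNReal.ofReal_add (by linarith) hM'0, sub_add_cancel] at hle
    exact absurd (lt_of_lt_of_le hmem' hle) (lt_irrefl _)
  rw [decRe_master]
  have hsplit : Ioi (0:ℝ) = Ioc 0 M' ∪ Ioi M' := (Ioc_union_Ioi_eq_Ioi hM'0).symm
  rw [hsplit, lintegral_union measurableSet_Ioi (Ioc_disjoint_Ioi le_rfl)]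
  have hpart1 : ∫⁻ l in Ioc (0:ℝ) M',
      min (ENNReal.ofReal t) (μ {x | ENNReal.ofReal l < (‖f x‖₊ : ℝ≥0∞)})
        ≤ ENNReal.ofReal t * M := by
    calc ∫⁻ l in Ioc (0:ℝ) M',
        min (ENNReal.ofReal t) (μ {x | ENNReal.ofReal l < (‖f x‖₊ : ℝ≥0∞)})
        ≤ ∫⁻ _ in Ioc (0:ℝ) M', ENNReal.ofReal t :=
          lintegral_mono fun l => min_le_left _ _
      _ = ENNReal.ofReal t * M := by
          rw [setLIntegral_const, Real.volume_Ioc, sub_zero, hMeq]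
  have hpart2 : ∫⁻ l in Ioi M',
      min (ENNReal.ofReal t) (μ {x | ENNReal.ofReal l < (‖f x‖₊ : ℝ≥0∞)})
        ≤ eLpNorm g 1 μ := by
    calc ∫⁻ l in Ioi M',
        min (ENNReal.ofReal t) (μ {x | ENNReal.ofReal l < (‖f x‖₊ : ℝ≥0∞)})
        ≤ ∫⁻ l in Ioi M', μ {x | ENNReal.ofReal (l - M') < (‖g x‖₊ : ℝ≥0∞)} :=
          setLIntegral_mono' measurableSet_Ioi fun l hl =>
            le_trans (min_le_right _ _) (key l hl)
      _ = ∫⁻ l in Ioi (0:ℝ), μ {x | ENNReal.ofReal l < (‖g x‖₊ : ℝ≥0∞)} :=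
          lintegral_shift M' (fun l => μ {x | ENNReal.ofReal l < (‖g x‖₊ : ℝ≥0∞)})
      _ = ∫⁻ l in Ioi (0:ℝ), μ {x | l < |g x|} := by
          refine setLIntegral_congr_fun measurableSet_Ioi (fun l hl => ?_)
          congr 1
          ext x
          simp only [mem_setOf_eq, ← enorm_eq_nnnorm, Real.enorm_eq_ofReal_abs]
          exact ENNReal.ofReal_lt_ofReal_iff_of_nonneg hl.le
      _ = ∫⁻ x, ENNReal.ofReal |g x| ∂μ :=
          (lintegral_eq_lintegral_meas_lt μ (ae_of_all _ fun x => abs_nonneg (g x))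
            (continuous_abs.measurable.comp_aemeasurable hgm.aemeasurable)).symm
      _ = eLpNorm g 1 μ := by
          rw [eLpNorm_one_eq_lintegral_enorm]
          refine lintegral_congr fun x => ?_
          rw [Real.enorm_eq_ofReal_abs]
  calc (∫⁻ l in Ioc (0:ℝ) M',
        min (ENNReal.ofReal t) (μ {x | ENNReal.ofReal l < (‖f x‖₊ : ℝ≥0∞)}))
      + ∫⁻ l in Ioi M',
        min (ENNReal.ofReal t) (μ {x | ENNReal.ofReal l < (‖f x‖₊ : ℝ≥0∞)})
      ≤ ENNReal.ofReal t * M + eLpNorm g 1 μ := add_le_add hpart1 hpart2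
    _ = eLpNorm g 1 μ + ENNReal.ofReal t * M := add_comm _ _

lemma le_decRe_integral (t : ℝ) (ht : 0 < t)
    (hf : ∃ g h : X → ℝ, f = g + h ∧ MemLp g 1 μ ∧ MemLp h ⊤ μ) :
    KfunctionalL1Linfty μ f t ≤ ∫⁻ s in Ioo (0 : ℝ) t, decRearrangement μ f s := by
  obtain ⟨g1, h1, hfgh1, hg1, hh1⟩ := hf
  have hfm : AEStronglyMeasurable f μ := by rw [hfgh1]; exact hg1.1.add hh1.1
  have hlam0top : decRearrangement μ f t ≠ ⊤ :=
    (decRe_lt_top ⟨g1, h1, hfgh1, hg1, hh1⟩ ht).ne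
  set lam0 := decRearrangement μ f t with hlam0
  set lam := lam0.toReal with hlam
  have hlam_nn : 0 ≤ lam := ENNReal.toReal_nonneg
  have hlam_eq : ENNReal.ofReal lam = lam0 := ENNReal.ofReal_toReal hlam0top
  set h0 : X → ℝ := fun x => max (-lam) (min (f x) lam) with hh0def
  set g0 : X → ℝ := fun x => f x - h0 x with hg0def
  have hfgh : f = g0 + h0 := by funext x; simp [hg0def]
  have hh0m : AEStronglyMeasurable h0 μ := by
    have h4 : AEMeasurable h0 μ :=
      aemeasurable_const.max (hfm.aemeasurable.min aemeasurable_const)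
    exact h4.aestronglyMeasurable
  have hg0m : AEStronglyMeasurable g0 μ := hfm.sub hh0m
  have habs : ∀ x, |g0 x| = max (|f x| - lam) 0 := by
    intro x
    simp only [hg0def, hh0def]
    rcases le_total (f x) (-lam) with h1 | h1
    · rw [min_eq_left (h1.trans (neg_le_self hlam_nn)), max_eq_left h1,
        abs_of_nonpos (by linarith), abs_of_nonpos (by linarith),
        max_eq_left (by linarith)]
      ring
    · rcases le_total (f x) lam with h2 | h2
      · rw [min_eq_left h2, max_eq_right h1, sub_self, abs_zero]
        rcases le_total 0 (f x) with h3 | h3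
        · rw [abs_of_nonneg h3, max_eq_right (by linarith)]
        · rw [abs_of_nonpos h3, max_eq_right (by linarith)]
      · rw [min_eq_right h2, max_eq_right (by linarith : -lam ≤ lam),
          abs_of_nonneg (by linarith), abs_of_nonneg (by linarith),
          max_eq_left (by linarith)]
  have hh0b : eLpNorm h0 ⊤ μ ≤ lam0 := by
    rw [eLpNorm_exponent_top, ← hlam_eq]
    refine eLpNormEssSup_le_of_ae_bound (ae_of_all _ fun x => ?_)
    rw [Real.norm_eq_abs, hh0def, abs_le]
    exact ⟨le_max_left _ _, max_le (neg_le_self hlam_nn) (min_le_right _ _)⟩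
  have hG : eLpNorm g0 1 μ
      = ∫⁻ l in Ioi lam, μ {x | ENNReal.ofReal l < (‖f x‖₊ : ℝ≥0∞)} := by
    have h1 : eLpNorm g0 1 μ = ∫⁻ x, ENNReal.ofReal (max (|f x| - lam) 0) ∂μ := by
      rw [eLpNorm_one_eq_lintegral_enorm]
      refine lintegral_congr fun x => ?_
      rw [Real.enorm_eq_ofReal_abs, habs x]
    have hFm : AEMeasurable (fun x => max (|f x| - lam) 0) μ := by
      have h8 : AEMeasurable (fun x => |f x|) μ :=
        continuous_abs.measurable.comp_aemeasurable hfm.aemeasurable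
      exact (h8.sub aemeasurable_const).max aemeasurable_const
    have hFnn : (0 : X → ℝ) ≤ᵐ[μ] fun x => max (|f x| - lam) 0 :=
      ae_of_all _ fun x => le_max_right _ _
    rw [h1, lintegral_eq_lintegral_meas_lt μ hFnn hFm]
    have h2 : ∀ l : ℝ, 0 < l → {x | l < max (|f x| - lam) 0}
        = {x | ENNReal.ofReal (lam + l) < (‖f x‖₊ : ℝ≥0∞)} := by
      intro l hl
      ext x
      simp only [mem_setOf_eq, ← enorm_eq_nnnorm, Real.enorm_eq_ofReal_abs, lt_max_iff]
      rw [ENNReal.ofReal_lt_ofReal_iff_of_nonneg (by linarith)]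
      constructor
      · rintro (h | h)
        · linarith
        · linarith
      · intro h; left; linarith
    calc ∫⁻ l in Ioi (0:ℝ), μ {x | l < max (|f x| - lam) 0}
        = ∫⁻ l in Ioi (0:ℝ), μ {x | ENNReal.ofReal (lam + l) < (‖f x‖₊ : ℝ≥0∞)} := by
          refine setLIntegral_congr_fun measurableSet_Ioi (fun l hl => ?_)
          rw [h2 l hl]
      _ = ∫⁻ l in Ioi lam, μ {x | ENNReal.ofReal l < (‖f x‖₊ : ℝ≥0∞)} := by
          rw [← lintegral_shift lam
            (fun l => μ {x | ENNReal.ofReal (lam + l) < (‖f x‖₊ : ℝ≥0∞)})]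
          refine setLIntegral_congr_fun measurableSet_Ioi (fun l _ => ?_)
          have h5 : lam + (l - lam) = l := by ring
          rw [h5]
  have htot : eLpNorm g0 1 μ + ENNReal.ofReal t * lam0
      = ∫⁻ s in Ioo (0:ℝ) t, decRearrangement μ f s := by
    rw [decRe_master, hG]
    have hsplit : Ioi (0:ℝ) = Ioc 0 lam ∪ Ioi lam := (Ioc_union_Ioi_eq_Ioi hlam_nn).symm
    rw [hsplit, lintegral_union measurableSet_Ioi (Ioc_disjoint_Ioi le_rfl)]
    have hA : ∫⁻ l in Ioc (0:ℝ) lam,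
        min (ENNReal.ofReal t) (μ {x | ENNReal.ofReal l < (‖f x‖₊ : ℝ≥0∞)})
          = ENNReal.ofReal t * lam0 := by
      rw [← Measure.restrict_congr_set Ioo_ae_eq_Ioc]
      have h6 : ∀ l ∈ Ioo (0:ℝ) lam,
          min (ENNReal.ofReal t) (μ {x | ENNReal.ofReal l < (‖f x‖₊ : ℝ≥0∞)})
            = ENNReal.ofReal t := by
        intro l hl
        refine min_eq_left ?_
        have hlt : ENNReal.ofReal l < lam0 := by
          rw [← hlam_eq]
          exact (ENNReal.ofReal_lt_ofReal_iff_of_nonneg hl.1.le).mpr hl.2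
        exact (lt_decRe_iff.mp hlt).le
      rw [setLIntegral_congr_fun measurableSet_Ioo h6, setLIntegral_const,
        Real.volume_Ioo, sub_zero, hlam_eq]
    have hB : ∫⁻ l in Ioi lam,
        min (ENNReal.ofReal t) (μ {x | ENNReal.ofReal l < (‖f x‖₊ : ℝ≥0∞)})
          = ∫⁻ l in Ioi lam, μ {x | ENNReal.ofReal l < (‖f x‖₊ : ℝ≥0∞)} := by
      refine setLIntegral_congr_fun measurableSet_Ioi (fun l hl => ?_)
      refine min_eq_right ?_
      have h7 : lam0 ≤ ENNReal.ofReal l := by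
        rw [← hlam_eq]
        exact ENNReal.ofReal_le_ofReal hl.le
      exact le_trans (measure_mono fun x hx => lt_of_le_of_lt h7 hx) (meas_decRe_le t)
    rw [hA, hB, add_comm]
  have hKle : KfunctionalL1Linfty μ f t
      ≤ eLpNorm g0 1 μ + ENNReal.ofReal t * eLpNorm h0 ⊤ μ := by
    refine iInf_le_of_le g0 ?_
    refine iInf_le_of_le h0 ?_
    refine iInf_le_of_le hfgh ?_
    refine iInf_le_of_le hg0m ?_
    exact iInf_le _ hh0m
  refine hKle.trans ?_
  rw [← htot]
  exact add_le_add_right (mul_le_mul_right hh0b _) _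


end Aux

/-- For a σ-finite measure space and `f ∈ L¹ + L^∞`:
`K(f, t, L¹, L^∞) = t · f^{**}(t)` for every `t > 0`. -/
theorem Kfunctional_eq_t_mul_doubleStar (X : Type) [MeasurableSpace X]
    (μ : Measure X) [SigmaFinite μ] (f : X → ℝ)
    (hf : ∃ g h : X → ℝ, f = g + h ∧ MemLp g 1 μ ∧ MemLp h ⊤ μ) :
    ∀ t : ℝ, 0 < t →
      KfunctionalL1Linfty μ f t = ENNReal.ofReal t * maxDecRearrangement μ f t := by
  intro t ht
  have htne : ENNReal.ofReal t ≠ 0 := (ENNReal.ofReal_pos.mpr ht).ne'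
  have hrhs : ENNReal.ofReal t * maxDecRearrangement μ f t
      = ∫⁻ s in Ioo (0:ℝ) t, decRearrangement μ f s := by
    rw [maxDecRearrangement, ← mul_assoc,
      ENNReal.mul_inv_cancel htne ENNReal.ofReal_ne_top, one_mul]
  rw [hrhs]
  refine le_antisymm (le_decRe_integral t ht hf) ?_
  refine le_iInf fun g => le_iInf fun h => le_iInf fun hfgh =>
    le_iInf fun hgm => le_iInf fun hhm => ?_
  exact decRe_integral_le t ht g h hfgh hgm
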